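/- If a 0-1 matrix A is linearly consistent (there exists a linear order ≻ on the disjoint union of rows and columns such that for all rows i ≻ i' and columns a ≻ b, A[i][b] = 1 and A[i'][a] = 1 imply A[i][a] = 1) and A is domination-free (no column's support is strictly contained in another column's support), then A has the consecutive-ones property for rows: ordering the columns according to ≻, in every row the 1-entries form a contiguous interval. -/

import Mathlib

/-- The linear-consistency condition for a given strict order `r` (where `r x y` means
`x ≻ y`) on the disjoint union of rows and columns. -/
def LCCond {n m : ℕ} (A : Fin n → Fin m → Bool)
    (r : (Fin n ⊕ Fin m) → (Fin n ⊕ Fin m) → Prop) : Prop :=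
  ∀ (i i' : Fin n) (a b : Fin m), r (Sum.inl i) (Sum.inl i') → r (Sum.inr a) (Sum.inr b) →
    A i b = true → A i' a = true → A i a = true

/-- No column's support set is a strict subset of another column's support set. -/
def DominationFree {n m : ℕ} (A : Fin n → Fin m → Bool) : Prop :=
  ¬ ∃ j j' : Fin m, {i | A i j' = true} ⊂ {i | A i j = true}

/-- If `A` is linearly consistent via the strict linear order `r` and `A` is domination-free,
then ordering the columns according to `r`, the `1`-entries of every row are contiguous. -/
theorem lc_dominationFree_implies_CI {n m : ℕ} (A : Fin n → Fin m → Bool)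
    (r : (Fin n ⊕ Fin m) → (Fin n ⊕ Fin m) → Prop)
    (hSTO : IsStrictTotalOrder _ r) (hLC : LCCond A r) (hDF : DominationFree A) :
    ∀ (i : Fin n) (a b c : Fin m), r (Sum.inr a) (Sum.inr b) → r (Sum.inr b) (Sum.inr c) →
      A i a = true → A i c = true → A i b = true := by
  intro i a b c hab hbc hia hic
  by_contra hib
  -- Since column b is not dominated by column a, there is a row i1 with
  -- A i1 b = true but A i1 a = false.
  have h1 : ¬ ({x | A x b = true} ⊆ {x | A x a = true}) := by
    intro hsub
    exact hDF ⟨a, b, hsub, fun hsub' => hib (hsub' hia)⟩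
  obtain ⟨i1, h1b, h1a⟩ := Set.not_subset.mp h1
  have htri : r (Sum.inl i) (Sum.inl i1) ∨ (Sum.inl i : Fin n ⊕ Fin m) = Sum.inl i1 ∨ r (Sum.inl i1) (Sum.inl i) := by
    by_cases p : r (Sum.inl i) (Sum.inl i1)
    · exact Or.inl p
    by_cases q : r (Sum.inl i1) (Sum.inl i)
    · exact Or.inr (Or.inr q)
    exact Or.inr (Or.inl (hSTO.trichotomous _ _ p q))
  rcases htri with h | h | h
  · exact hib (hLC i i1 b c h hbc hic h1b)
  · exact h1a (by rw [← Sum.inl.inj h]; exact hia)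
  · exact h1a (hLC i1 i a b h hab h1b hia)
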